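/- Let π ∈ (0,1) and d, v, s ∈ ℝ with π(1−π)(v+s) − π²(1−π)²d² ≠ 0. Let N be the 3×3 real matrix with rows (1, π, 0), (π, π, −π(1−π)d), (0, −π(1−π)d, v + s), let D = diag(0, 0, s), and let β° = (β₀, β₁, β₂) ∈ ℝ³. Then the second component (the component corresponding to the treatment effect) of the vector N⁻¹ · (D · β°) equals s·β₂·π(1−π)·d / ( π(1−π)(v+s) − π²(1−π)²d² ). (This is the matrix algebra behind the Appendix A1 asymptotic bias formula b₁ for the treatment-effect estimate under a noisy covariate.) -/
import Mathlib


open Matrix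

/-- Matrix algebra behind the Appendix A1 asymptotic bias formula: for the limiting
normalized design matrix `N` with rows `(1, π, 0)`, `(π, π, −π(1−π)d)`,
`(0, −π(1−π)d, v+s)` with nonzero determinant, and `D = diag(0,0,s)`, the second
component (treatment-effect component) of `N⁻¹ · (D · β°)` equals
`s·β₂·π(1−π)·d / ( π(1−π)(v+s) − π²(1−π)²d² )`. -/
theorem bias_vector_treatment_component
    (π d v s β₀ β₁ β₂ : ℝ) (hπ : π ∈ Set.Ioo (0 : ℝ) 1)
    (hdet : π * (1 - π) * (v + s) - π ^ 2 * (1 - π) ^ 2 * d ^ 2 ≠ 0)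
    (N D : Matrix (Fin 3) (Fin 3) ℝ) (βo : Fin 3 → ℝ)
    (hN : N = !![1, π, 0;
                 π, π, -(π * (1 - π) * d);
                 0, -(π * (1 - π) * d), v + s])
    (hD : D = Matrix.diagonal ![0, 0, s])
    (hβ : βo = ![β₀, β₁, β₂]) :
    N⁻¹.mulVec (D.mulVec βo) 1
      = s * β₂ * (π * (1 - π)) * d
          / (π * (1 - π) * (v + s) - π ^ 2 * (1 - π) ^ 2 * d ^ 2) := by
  set Δ : ℝ := π * (1 - π) * (v + s) - π ^ 2 * (1 - π) ^ 2 * d ^ 2 with hΔ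
  have hdN : N.det ≠ 0 := by
    rw [hN, Matrix.det_fin_three]
    convert hdet using 1
    simp [Matrix.cons_val_zero, Matrix.cons_val_one]
    ring
  set y : Fin 3 → ℝ :=
    ![(-(π * (π * (1 - π) * d)) * s * β₂) / Δ,
      ((π * (1 - π) * d) * s * β₂) / Δ,
      (π * (1 - π) * s * β₂) / Δ] with hy
  have hx : D.mulVec βo = ![0, 0, s * β₂] := by
    subst hD hβ
    funext i
    fin_cases i <;>
      simp [Matrix.mulVec, dotProduct, Fin.sum_univ_three, Matrix.diagonal]
  have hNy : N.mulVec y = ![0, 0, s * β₂] := by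
    subst hN
    funext i
    fin_cases i <;>
    · simp [hy, Matrix.mulVec, dotProduct, Fin.sum_univ_three]
      field_simp
      ring
  have h1 : N⁻¹.mulVec (D.mulVec βo) = y := by
    rw [hx, ← hNy, Matrix.mulVec_mulVec, Matrix.nonsing_inv_mul N (isUnit_iff_ne_zero.mpr hdN), Matrix.one_mulVec]
  rw [h1]
  simp [hy]
  ring
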